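/- The function max : ℕ² → ℕ, (x_1, x_2) ↦ max(x_1, x_2), is not obliviously-computable: no output-oblivious CRN (even with an initial leader) stably computes it. -/

import Mathlib

/-- A chemical reaction network with species type `σ`, designated input species
`inputs i` for each of the `d` inputs, an output species, and a leader species. -/
structure CRN (d : ℕ) (σ : Type) [Fintype σ] [DecidableEq σ] where
  /-- Each reaction is a pair `(r, p)` of reactant counts and product counts. -/
  reactions : Finset ((σ → ℕ) × (σ → ℕ))
  inputs : Fin d → σ
  output : σ
  leader : σ
  inputs_inj : Function.Injective inputs
  leader_not_input : ∀ i, inputs i ≠ leader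

namespace CRN

variable {d : ℕ} {σ : Type} [Fintype σ] [DecidableEq σ]

/-- One reaction step: some reaction `(r, p)` with `r ≤ c` pointwise fires,
yielding `c - r + p`. -/
def Step (C : CRN d σ) (c c' : σ → ℕ) : Prop :=
  ∃ rp ∈ C.reactions, rp.1 ≤ c ∧ c' = c - rp.1 + rp.2

/-- Reachability by a finite sequence of reaction steps. -/
def Reachable (C : CRN d σ) : (σ → ℕ) → (σ → ℕ) → Prop :=
  Relation.ReflTransGen C.Step

/-- The initial configuration encoding input `x`: count `x i` of input species
`inputs i`, count 1 of the leader, count 0 of everything else. -/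
def init (C : CRN d σ) (x : Fin d → ℕ) : σ → ℕ :=
  fun s => (∑ i, if C.inputs i = s then x i else 0) + (if s = C.leader then 1 else 0)

/-- A configuration is stable if the output count never changes from it. -/
def Stable (C : CRN d σ) (c : σ → ℕ) : Prop :=
  ∀ c', C.Reachable c c' → c' C.output = c C.output

/-- `C` stably computes `f` if from every configuration reachable from an initial
configuration, a stable configuration with correct output count is reachable. -/
def StablyComputes (C : CRN d σ) (f : (Fin d → ℕ) → ℕ) : Prop :=
  ∀ x c, C.Reachable (C.init x) c →
    ∃ o, C.Reachable c o ∧ C.Stable o ∧ o C.output = f x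

/-- A CRN is output-oblivious if the output species is never a reactant. -/
def OutputOblivious (C : CRN d σ) : Prop :=
  ∀ rp ∈ C.reactions, rp.1 C.output = 0

/-- A CRN is output-monotonic if no reaction decreases the output species count. -/
def OutputMonotonic (C : CRN d σ) : Prop :=
  ∀ rp ∈ C.reactions, rp.1 C.output ≤ rp.2 C.output

end CRN

/-- `f` is obliviously-computable if some output-oblivious CRN stably computes it. -/
def ObliviouslyComputable {d : ℕ} (f : (Fin d → ℕ) → ℕ) : Prop :=
  ∃ (n : ℕ) (C : CRN d (Fin n)), C.OutputOblivious ∧ C.StablyComputes f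

namespace CRN

variable {d : ℕ} {σ : Type} [Fintype σ] [DecidableEq σ]

/-- Steps are additive: adding a context `e` preserves a step. -/
lemma Step.add_right {C : CRN d σ} {c c' : σ → ℕ} (h : C.Step c c') (e : σ → ℕ) :
    C.Step (c + e) (c' + e) := by
  obtain ⟨rp, hrp, hle, heq⟩ := h
  refine ⟨rp, hrp, fun s => le_trans (hle s) (Nat.le_add_right _ _), ?_⟩
  funext s
  have h1 : rp.1 s ≤ c s := hle s
  have h2 : c' s = c s - rp.1 s + rp.2 s := by rw [heq]; rfl
  simp only [Pi.add_apply, Pi.sub_apply]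
  rw [h2]
  omega

/-- Reachability is additive. -/
lemma Reachable.add_right {C : CRN d σ} {c c' : σ → ℕ} (h : C.Reachable c c') (e : σ → ℕ) :
    C.Reachable (c + e) (c' + e) := by
  induction h with
  | refl => exact Relation.ReflTransGen.refl
  | tail _ hstep ih => exact ih.tail (hstep.add_right e)

/-- In an output-oblivious CRN, the output count is monotone along reachability. -/
lemma Reachable.output_mono {C : CRN d σ} (hob : C.OutputOblivious) {c c' : σ → ℕ}
    (h : C.Reachable c c') : c C.output ≤ c' C.output := by
  induction h with
  | refl => exact le_refl _
  | tail _ hstep ih =>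
    obtain ⟨rp, hrp, hle, heq⟩ := hstep
    have := hob rp hrp
    have h2 := hle C.output
    calc c C.output ≤ _ := ih
    _ ≤ _ := by rw [heq]; simp only [Pi.add_apply, Pi.sub_apply]; omega

/-- Decomposition of a 2-input initial configuration. -/
lemma init_decomp (C : CRN 2 σ) (a b : ℕ) :
    C.init ![a, b] = C.init ![a, 0] + (fun s => if C.inputs 1 = s then b else 0) := by
  funext s
  simp only [init, Fin.sum_univ_two, Matrix.cons_val_zero, Matrix.cons_val_one,
    Matrix.head_cons, Pi.add_apply]
  split_ifs <;> ring

end CRN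

/-- `max : ℕ² → ℕ` is not obliviously-computable: no output-oblivious CRN (even
with an initial leader) stably computes it. -/
theorem max_not_obliviouslyComputable :
    ¬ ObliviouslyComputable (fun x : Fin 2 → ℕ => max (x 0) (x 1)) := by
  rintro ⟨k, C, hob, hsc⟩
  -- For each `n`, pick a configuration reachable from `init (n, 0)` with output `n`.
  have key : ∀ n : ℕ, ∃ c, C.Reachable (C.init ![n, 0]) c ∧ c C.output = n := by
    intro n
    obtain ⟨o, ho1, _, ho3⟩ := hsc ![n, 0] _ Relation.ReflTransGen.refl
    refine ⟨o, ho1, ?_⟩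
    simpa using ho3
  choose c hc1 hc2 using key
  -- Dickson's lemma: find m < n with c m ≤ c n.
  have hinst : ∀ _ : Fin k, IsWellOrder ℕ (· < ·) := fun _ => inferInstance
  have hpwo : (Set.univ : Set (Fin k → ℕ)).IsPWO := Set.isPWO_of_wellQuasiOrderedLE _
  obtain ⟨m, n, hmn, hle⟩ := Set.PartiallyWellOrderedOn.exists_lt hpwo (f := c) (fun _ => Set.mem_univ _)
  set e : Fin k → ℕ := c n - c m with he
  have hce : c m + e = c n := by
    funext s
    have hs : c m s ≤ c n s := hle s
    simp only [he, Pi.add_apply, Pi.sub_apply]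
    omega
  have heY : e C.output = n - m := by
    simp only [he, Pi.sub_apply, hc2]
  -- the extra copies of input species X₂
  set w : Fin k → ℕ := fun s => if C.inputs 1 = s then n else 0 with hw
  -- from init (m, n) we reach c m + w, which must stabilize at output n
  have hreach1 : C.Reachable (C.init ![m, n]) (c m + w) := by
    rw [C.init_decomp m n]
    exact (hc1 m).add_right w
  obtain ⟨o, ho1, _, ho3⟩ := hsc ![m, n] _ hreach1
  have hoY : o C.output = n := by
    simpa [Nat.max_eq_right hmn.le] using ho3
  -- from init (n, n) we reach c n + w = c m + w + e, hence o + e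
  have hreach2 : C.Reachable (C.init ![n, n]) (o + e) := by
    have h1 : C.Reachable (C.init ![n, n]) (c n + w) := by
      rw [C.init_decomp n n]
      exact (hc1 n).add_right w
    have h2 : c n + w = c m + w + e := by
      rw [← hce]; funext s; simp only [Pi.add_apply]; ring
    rw [h2] at h1
    exact h1.trans (ho1.add_right e)
  -- but o + e has output 2n - m > n = max n n, contradicting monotonicity
  obtain ⟨o', ho'1, _, ho'3⟩ := hsc ![n, n] _ hreach2
  have hmono := ho'1.output_mono hob
  simp only [Matrix.cons_val_zero, Matrix.cons_val_one, Matrix.head_cons, max_self] at ho'3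
  have hfin : n + (n - m) ≤ n := by
    calc n + (n - m) = o C.output + e C.output := by rw [hoY, heY]
    _ = (o + e) C.output := rfl
    _ ≤ o' C.output := hmono
    _ = n := ho'3
  exact absurd hfin (Nat.not_le.mpr (Nat.lt_add_of_pos_right (Nat.sub_pos_of_lt hmn)))
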